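/- Let λ = (a_1^{b_1},…,a_r^{b_r}) with a_1 > … > a_r > 0, b_i > 0, and define λ^0 = (a_1^{b_1−1},(a_2−1)^{b_2},…,(a_{r−1}−1)^{b_{r−1}},(a_r−1)^{b_r+1}). Then (λ^0)^T = (λ^T)^0, i.e., the operation λ ↦ λ^0 commutes with conjugation of partitions. -/

import Mathlib

/-- The partition `(a_1^{b_1}, …, a_r^{b_r})` given by lists of part sizes `a`
and multiplicities `b`, as a function (0-indexed; zero beyond the last part). -/
def rectsP (a b : List ℕ) : ℕ → ℕ :=
  fun i => ((a.zip b).flatMap fun p => List.replicate p.2 p.1).getD i 0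

/-- The conjugate (transpose) partition of `f`: `(conjP f) j = #{i : f i > j}`. -/
noncomputable def conjP (f : ℕ → ℕ) : ℕ → ℕ := fun j => Set.ncard {i : ℕ | j < f i}

/-- `λ^0 = (a_1^{b_1−1}, (a_2−1)^{b_2}, …, (a_{r−1}−1)^{b_{r−1}}, (a_r−1)^{b_r+1})`. -/
def lamZero (a b : List ℕ) : ℕ → ℕ :=
  rectsP (a.headI :: (a.tail.map fun x => x - 1))
    ((b.set 0 (b.headI - 1)).set (b.length - 1) (b.getD (b.length - 1) 0 + 1))


lemma rectsP_nil_left (b : List ℕ) (i : ℕ) : rectsP [] b i = 0 := by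
  simp [rectsP]

lemma rectsP_nil_right (a : List ℕ) (i : ℕ) : rectsP a [] i = 0 := by
  simp [rectsP]

lemma rectsP_cons (x m : ℕ) (a b : List ℕ) (i : ℕ) :
    rectsP (x :: a) (m :: b) i = if i < m then x else rectsP a b (i - m) := by
  unfold rectsP
  rw [List.zip_cons_cons, List.flatMap_cons]
  by_cases h : i < m
  · rw [if_pos h, List.getD_append _ _ _ i (by simpa using h),
      List.getD_eq_getElem _ _ (by simpa using h), List.getElem_replicate]
  · rw [if_neg h, List.getD_append_right _ _ _ _ (by simpa using Nat.le_of_not_lt h)]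
    simp

lemma rectsP_zero (a b : List ℕ) :
    rectsP a b (((a.zip b).flatMap fun p => List.replicate p.2 p.1).length) = 0 :=
  List.getD_eq_default _ _ le_rfl

lemma rectsP_mem (a : List ℕ) : ∀ (b : List ℕ) (i : ℕ), rectsP a b i = 0 ∨ rectsP a b i ∈ a := by
  induction a with
  | nil => intro b i; left; exact rectsP_nil_left b i
  | cons x t ih =>
    intro b i
    cases b with
    | nil => left; exact rectsP_nil_right _ i
    | cons m s =>
      rw [rectsP_cons]
      by_cases h : i < m
      · rw [if_pos h]; right; exact List.mem_cons_self
      · rw [if_neg h]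
        rcases ih s (i - m) with h0 | hmem
        · left; exact h0
        · right; exact List.mem_cons_of_mem _ hmem

lemma rectsP_anti (a : List ℕ) : ∀ (b : List ℕ), a.Chain' (· > ·) →
    ∀ i j, i ≤ j → rectsP a b j ≤ rectsP a b i := by
  induction a with
  | nil => intro b _ i j _; rw [rectsP_nil_left, rectsP_nil_left]
  | cons x t ih =>
    intro b hch i j hij
    cases b with
    | nil => rw [rectsP_nil_right, rectsP_nil_right]
    | cons m s =>
      have hlt : ∀ y ∈ t, y < x :=
        fun y hy => (List.pairwise_cons.mp (List.isChain_iff_pairwise.mp hch)).1 y hy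
      rw [rectsP_cons, rectsP_cons]
      by_cases h1 : i < m
      · rw [if_pos h1]
        by_cases h2 : j < m
        · rw [if_pos h2]
        · rw [if_neg h2]
          rcases rectsP_mem t s (j - m) with h0 | hmem
          · omega
          · exact le_of_lt (hlt _ hmem)
      · rw [if_neg h1, if_neg (by omega)]
        exact ih s hch.tail _ _ (by omega)


lemma conjP_Iio (g : ℕ → ℕ) (hg : ∀ i j, i ≤ j → g j ≤ g i) (N : ℕ) (hN : g N = 0) (j : ℕ) :
    {i : ℕ | j < g i} = Set.Iio (conjP g j) := by
  have hne : N ∈ {k : ℕ | g k ≤ j} := by simp [hN]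
  set m := sInf {k : ℕ | g k ≤ j} with hm_def
  have hm : g m ≤ j := Nat.sInf_mem ⟨N, hne⟩
  have heq : {i : ℕ | j < g i} = Set.Iio m := by
    ext k
    simp only [Set.mem_setOf_eq, Set.mem_Iio]
    constructor
    · intro hk
      by_contra h
      have := hg m k (by omega)
      omega
    · intro hk
      have h2 := Nat.notMem_of_lt_sInf (s := {k : ℕ | g k ≤ j}) hk
      simp only [Set.mem_setOf_eq] at h2
      omega
  have hc : conjP g j = m := by
    unfold conjP
    rw [heq, ← Finset.coe_Iio, Set.ncard_coe_finset, Nat.card_Iio]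
  rw [heq, hc]

lemma conjP_dual (g : ℕ → ℕ) (hg : ∀ i j, i ≤ j → g j ≤ g i) (N : ℕ) (hN : g N = 0)
    (x y : ℕ) : y < g x ↔ x < conjP g y := by
  have h := conjP_Iio g hg N hN y
  rw [Set.ext_iff] at h
  simpa using h x


def FF (g : ℕ → ℕ) : ℕ → ℕ := fun i =>
  if g (i+1) = g 0 then g 0 else if g (i+1) = 0 then g i - 1 else g (i+1) - 1

lemma claim2 (g : ℕ → ℕ) (hg : ∀ i j, i ≤ j → g j ≤ g i) (N : ℕ) (hN : g N = 0)
    (h0 : 0 < g 0) : conjP (FF g) = FF (conjP g) := by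
  have hd : ∀ x y, y < g x ↔ x < conjP g y := conjP_dual g hg N hN
  have hmono' : ∀ y y', y ≤ y' → conjP g y' ≤ conjP g y := by
    intro y y' h
    by_contra hcon
    push_neg at hcon
    have h2 : y' < g (conjP g y) := (hd (conjP g y) y').mpr hcon
    have h3 : conjP g y < conjP g y := (hd (conjP g y) y).mp (by omega)
    omega
  have key : ∀ i j, (j < FF g i ↔ i < FF (conjP g) j) := by
    intro i j
    have d1 := hd i j
    have d2 := hd i (j+1)
    have d3 := hd (i+1) j
    have d4 := hd (i+1) (j+1)
    have d5 := hd (i+1) (g 0 - 1)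
    have d6 := hd (conjP g 0 - 1) (j+1)
    have d7 := hd 0 (j+1)
    have d8 := hd (i+1) 0
    have d9 := hd 0 0
    have m1 := hg i (i+1) (by omega)
    have m2 := hg 0 i (Nat.zero_le _)
    have m2' := hg 0 (i+1) (Nat.zero_le _)
    have m3 := hg 0 (conjP g 0 - 1) (Nat.zero_le _)
    have n1 := hmono' j (j+1) (by omega)
    have n2 := hmono' 0 j (Nat.zero_le _)
    have n2' := hmono' 0 (j+1) (Nat.zero_le _)
    have n3 := hmono' 0 (g 0 - 1) (Nat.zero_le _)
    simp only [FF]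
    split_ifs <;> omega
  funext j
  have hset : {i : ℕ | j < FF g i} = Set.Iio (FF (conjP g) j) := by
    ext i
    simpa [Set.mem_Iio] using key i j
  show Set.ncard {i : ℕ | j < FF g i} = FF (conjP g) j
  rw [hset, ← Finset.coe_Iio, Set.ncard_coe_finset, Nat.card_Iio]


lemma lemC (t : List ℕ) : ∀ (s : List ℕ), t.length = s.length → 1 ≤ t.length →
    (∀ x ∈ t, 0 < x) → (∀ x ∈ s, 0 < x) → ∀ j,
    rectsP (t.map (fun x => x - 1)) (s.set (s.length - 1) (s.getD (s.length - 1) 0 + 1)) j =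
      if rectsP t s j = 0 then rectsP t s (j-1) - 1 else rectsP t s j - 1 := by
  induction t with
  | nil => intro s h h1 _ _ _; simp at h1
  | cons x t' ih =>
    intro s hlen h1 htp hsp j
    cases s with
    | nil => simp at hlen
    | cons n s' =>
      have hx : 0 < x := htp x List.mem_cons_self
      have hn : 0 < n := hsp n List.mem_cons_self
      cases t' with
      | nil =>
        -- s' = []
        cases s' with
        | nil =>
          simp only [List.map_cons, List.map_nil, List.length_cons, List.length_nil]
          norm_num
          rw [rectsP_cons, rectsP_cons, rectsP_cons]
          split_ifs <;> simp_all [rectsP_nil_left, rectsP_nil_right] <;> omega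
        | cons c s'' => simp at hlen
      | cons y t'' =>
        cases s' with
        | nil => simp at hlen
        | cons c s'' =>
          have hlen' : (y :: t'').length = (c :: s'').length := by
            simpa using hlen
          have hk : (n :: c :: s'').length - 1 = ((c :: s'').length - 1) + 1 := by
            simp
          rw [hk, List.set_cons_succ, List.getD_cons_succ, List.map_cons, rectsP_cons]
          have IH := ih (c :: s'') hlen' (by simp) (fun z hz => htp z (List.mem_cons_of_mem _ hz))
            (fun z hz => hsp z (List.mem_cons_of_mem _ hz))
          have hg0 : rectsP (y :: t'') (c :: s'') 0 = y := by
            rw [rectsP_cons, if_pos (hsp c (by simp))]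
          have hy : 0 < y := htp y (by simp)
          by_cases hj : j < n
          · rw [if_pos hj, rectsP_cons, if_pos hj]
            have hj1 : rectsP (x :: y :: t'') (n :: c :: s'') (j - 1) = x := by
              rw [rectsP_cons, if_pos (by omega)]
            rw [hj1]  -- handles branch via cond on x=0? x>0 so else branch
            rw [if_neg (by omega)]
          · have e1 : rectsP (x :: y :: t'') (n :: c :: s'') j =
                rectsP (y :: t'') (c :: s'') (j - n) := by
              rw [rectsP_cons, if_neg hj]
            rw [if_neg hj, IH (j - n), e1]
            by_cases h0 : rectsP (y :: t'') (c :: s'') (j - n) = 0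
            · rw [if_pos h0, if_pos h0]
              have hjn : 1 ≤ j - n := by
                by_contra hc
                have : j - n = 0 := by omega
                rw [this] at h0
                omega
              have e2 : rectsP (x :: y :: t'') (n :: c :: s'') (j - 1) =
                  rectsP (y :: t'') (c :: s'') (j - 1 - n) := by
                rw [rectsP_cons, if_neg (by omega)]
              rw [e2]
              congr 2
              omega
            · rw [if_neg h0, if_neg h0]


lemma claim1 (a b : List ℕ) (hlen : a.length = b.length) (h2 : 2 ≤ a.length)
    (hch : a.Chain' (· > ·)) (hap : ∀ x ∈ a, 0 < x) (hbp : ∀ x ∈ b, 0 < x) :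
    lamZero a b = FF (rectsP a b) := by
  match a, b, hlen, h2 with
  | a₁ :: a₂ :: t₂, m₁ :: m₂ :: s₂, hlen, _ =>
  set t : List ℕ := a₂ :: t₂ with ht
  set s : List ℕ := m₂ :: s₂ with hs
  have hlen' : t.length = s.length := by simpa using hlen
  have ha₁ : 0 < a₁ := hap a₁ (by simp)
  have hm₁ : 0 < m₁ := hbp m₁ (by simp)
  have hm₂ : 0 < m₂ := hbp m₂ (by rw [hs]; simp)
  have htp : ∀ x ∈ t, 0 < x := fun x hx => hap x (List.mem_cons_of_mem _ hx)
  have hsp : ∀ x ∈ s, 0 < x := fun x hx => hbp x (List.mem_cons_of_mem _ hx)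
  have hlt : ∀ y ∈ t, y < a₁ :=
    fun y hy => (List.pairwise_cons.mp (List.isChain_iff_pairwise.mp hch)).1 y hy
  -- unfold lamZero into a rectsP with cons lists
  have hsl : (m₁ :: s).length - 1 = (s.length - 1) + 1 := by rw [hs]; simp
  have hlam : lamZero (a₁ :: t) (m₁ :: s) =
      rectsP (a₁ :: t.map (fun x => x - 1))
        ((m₁ - 1) :: s.set (s.length - 1) (s.getD (s.length - 1) 0 + 1)) := by
    unfold lamZero
    simp only [List.headI_cons, List.tail_cons, List.set_cons_zero, hsl,
      List.set_cons_succ, List.getD_cons_succ]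
  rw [hlam]
  funext i
  have hg0 : rectsP (a₁ :: t) (m₁ :: s) 0 = a₁ := by
    rw [rectsP_cons, if_pos hm₁]
  rw [rectsP_cons]
  by_cases hc : i < m₁ - 1
  · have hgi1 : rectsP (a₁ :: t) (m₁ :: s) (i + 1) = a₁ := by
      rw [rectsP_cons, if_pos (by omega)]
    rw [if_pos hc]
    simp [FF, hgi1, hg0]
  · have hgi1 : rectsP (a₁ :: t) (m₁ :: s) (i + 1) = rectsP t s (i + 1 - m₁) := by
      rw [rectsP_cons, if_neg (by omega)]
    have hne : rectsP t s (i + 1 - m₁) ≠ a₁ := by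
      rcases rectsP_mem t s (i + 1 - m₁) with h0 | hmem
      · omega
      · have := hlt _ hmem; omega
    have hidx : i - (m₁ - 1) = i + 1 - m₁ := by omega
    rw [if_neg hc, hidx, lemC t s hlen' (by rw [ht]; simp) htp hsp (i + 1 - m₁)]
    simp only [FF, hgi1, hg0, if_neg hne]
    by_cases h0 : rectsP t s (i + 1 - m₁) = 0
    · rw [if_pos h0, if_pos h0]
      have hG0 : rectsP t s 0 = a₂ := by
        rw [ht, hs, rectsP_cons, if_pos hm₂]
      have hj1 : 1 ≤ i + 1 - m₁ := by
        by_contra hcc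
        have : i + 1 - m₁ = 0 := by omega
        rw [this, hG0] at h0
        have := hap a₂ (by rw [ht]; simp)
        omega
      have hgi : rectsP (a₁ :: t) (m₁ :: s) i = rectsP t s (i - m₁) := by
        rw [rectsP_cons, if_neg (by omega)]
      rw [hgi]
      congr 2
      omega
    · rw [if_neg h0, if_neg h0]

/-- the operation `λ ↦ λ^0` commutes with conjugation: if
`λ = (a_1^{b_1},…,a_r^{b_r})` is canonical with `r ≥ 2` and
`λ^T = (a'_1^{b'_1},…,a'_r^{b'_r})` is the canonical decomposition of the
conjugate, then `(λ^0)^T = (λ^T)^0`. -/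
theorem conj_lamZero (r : ℕ) (a b a' b' : List ℕ) (hr : 2 ≤ r)
    (ha : a.length = r) (hb : b.length = r) (ha' : a'.length = r) (hb' : b'.length = r)
    (hch : a.Chain' (· > ·)) (hch' : a'.Chain' (· > ·))
    (hap : ∀ x ∈ a, 0 < x) (hbp : ∀ x ∈ b, 0 < x)
    (hap' : ∀ x ∈ a', 0 < x) (hbp' : ∀ x ∈ b', 0 < x)
    (hconj : conjP (rectsP a b) = rectsP a' b') :
    conjP (lamZero a b) = lamZero a' b' := by
  have h2a : 2 ≤ a.length := by omega
  have hlab : a.length = b.length := by omega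
  have c1 : lamZero a b = FF (rectsP a b) := claim1 a b hlab h2a hch hap hbp
  have c1' : lamZero a' b' = FF (rectsP a' b') :=
    claim1 a' b' (by omega) (by omega) hch' hap' hbp'
  have hanti := rectsP_anti a b hch
  have h0 : 0 < rectsP a b 0 := by
    match a, b, ha, hb with
    | a₁ :: t, m₁ :: s, _, _ =>
      rw [rectsP_cons, if_pos (hbp m₁ (by simp))]
      exact hap a₁ (by simp)
  have c2 := claim2 (rectsP a b) hanti _ (rectsP_zero a b) h0
  rw [c1, c1', c2, hconj]
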